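/- Let 𝓙 be a generalized complex structure on a finite-dimensional real vector space V, and let W ⊆ V be a split subspace, with N ⊆ V such that V = W ⊕ N and W ⊕ Ann(N) is stable under 𝓙. Let 𝓚 = ψ ∘ (𝓙|_{W⊕Ann(N)}) ∘ ψ⁻¹ be the induced GCS on W, where ψ : W ⊕ Ann(N) → W ⊕ W* is (w,f) ↦ (w, f|_W). Then W, equipped with 𝓚, satisfies the graph condition: the graph {(w,w) : w ∈ W} ⊆ W ⊕ V of the inclusion is a generalized isotropic subspace of W ⊕ V with respect to the twisted product structure (the direct sum of 𝓚̃ and 𝓙). -/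

import Mathlib

open Module LinearMap

noncomputable def gcPair (V : Type*) [AddCommGroup V] [Module ℝ V]
    (x y : V × Module.Dual ℝ V) : ℝ :=
  -(1/2) * (x.2 y.1 + y.2 x.1)

noncomputable def IsGCS (V : Type*) [AddCommGroup V] [Module ℝ V]
    (J : (V × Module.Dual ℝ V) →ₗ[ℝ] (V × Module.Dual ℝ V)) : Prop :=
  J ∘ₗ J = -LinearMap.id ∧ ∀ x y, gcPair V (J x) (J y) = gcPair V x y

section Blocks

variable (V : Type*) [AddCommGroup V] [Module ℝ V]

noncomputable def blk1 (J : (V × Module.Dual ℝ V) →ₗ[ℝ] (V × Module.Dual ℝ V)) :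
    V →ₗ[ℝ] V :=
  (LinearMap.fst ℝ V (Module.Dual ℝ V)) ∘ₗ J ∘ₗ (LinearMap.inl ℝ V (Module.Dual ℝ V))

noncomputable def blk2 (J : (V × Module.Dual ℝ V) →ₗ[ℝ] (V × Module.Dual ℝ V)) :
    Module.Dual ℝ V →ₗ[ℝ] V :=
  (LinearMap.fst ℝ V (Module.Dual ℝ V)) ∘ₗ J ∘ₗ (LinearMap.inr ℝ V (Module.Dual ℝ V))

noncomputable def blk3 (J : (V × Module.Dual ℝ V) →ₗ[ℝ] (V × Module.Dual ℝ V)) :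
    V →ₗ[ℝ] Module.Dual ℝ V :=
  (LinearMap.snd ℝ V (Module.Dual ℝ V)) ∘ₗ J ∘ₗ (LinearMap.inl ℝ V (Module.Dual ℝ V))

noncomputable def blk4 (J : (V × Module.Dual ℝ V) →ₗ[ℝ] (V × Module.Dual ℝ V)) :
    Module.Dual ℝ V →ₗ[ℝ] Module.Dual ℝ V :=
  (LinearMap.snd ℝ V (Module.Dual ℝ V)) ∘ₗ J ∘ₗ (LinearMap.inr ℝ V (Module.Dual ℝ V))

noncomputable def ofBlocks (A : V →ₗ[ℝ] V) (B : Module.Dual ℝ V →ₗ[ℝ] V)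
    (C : V →ₗ[ℝ] Module.Dual ℝ V) (D : Module.Dual ℝ V →ₗ[ℝ] Module.Dual ℝ V) :
    (V × Module.Dual ℝ V) →ₗ[ℝ] (V × Module.Dual ℝ V) :=
  LinearMap.prod
    (A ∘ₗ LinearMap.fst ℝ V (Module.Dual ℝ V) + B ∘ₗ LinearMap.snd ℝ V (Module.Dual ℝ V))
    (C ∘ₗ LinearMap.fst ℝ V (Module.Dual ℝ V) + D ∘ₗ LinearMap.snd ℝ V (Module.Dual ℝ V))

/-- The twist `𝓙̃ = [[𝓙₁,-𝓙₂],[-𝓙₃,𝓙₄]]` of `𝓙`. -/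
noncomputable def gcTwist (J : (V × Module.Dual ℝ V) →ₗ[ℝ] (V × Module.Dual ℝ V)) :
    (V × Module.Dual ℝ V) →ₗ[ℝ] (V × Module.Dual ℝ V) :=
  ofBlocks V (blk1 V J) (-(blk2 V J)) (-(blk3 V J)) (blk4 V J)

end Blocks

section Prod

variable (U V : Type*) [AddCommGroup U] [Module ℝ U] [AddCommGroup V] [Module ℝ V]

/-- The natural identification `(U⊕V) ⊕ (U⊕V)* ≅ (U ⊕ U*) ⊕ (V ⊕ V*)`. -/
noncomputable def prodPack :
    ((U × V) × Module.Dual ℝ (U × V)) ≃ₗ[ℝ]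
      (U × Module.Dual ℝ U) × (V × Module.Dual ℝ V) :=
  ((LinearEquiv.refl ℝ (U × V)).prodCongr (Module.dualProdDualEquivDual ℝ U V).symm).trans
    (LinearEquiv.prodProdProdComm ℝ U V (Module.Dual ℝ U) (Module.Dual ℝ V))

/-- The direct sum of the structures `J_U` and `J_V` on `U ⊕ V`. -/
noncomputable def directSum
    (JU : (U × Module.Dual ℝ U) →ₗ[ℝ] (U × Module.Dual ℝ U))
    (JV : (V × Module.Dual ℝ V) →ₗ[ℝ] (V × Module.Dual ℝ V)) :
    ((U × V) × Module.Dual ℝ (U × V)) →ₗ[ℝ] ((U × V) × Module.Dual ℝ (U × V)) :=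
  (prodPack U V).symm.toLinearMap ∘ₗ (LinearMap.prodMap JU JV) ∘ₗ (prodPack U V).toLinearMap

/-- The twisted product structure on `U ⊕ V`: the direct sum of `𝓙̃_U` and `𝓙_V`. -/
noncomputable def twistedProd
    (JU : (U × Module.Dual ℝ U) →ₗ[ℝ] (U × Module.Dual ℝ U))
    (JV : (V × Module.Dual ℝ V) →ₗ[ℝ] (V × Module.Dual ℝ V)) :
    ((U × V) × Module.Dual ℝ (U × V)) →ₗ[ℝ] ((U × V) × Module.Dual ℝ (U × V)) :=
  directSum U V (gcTwist U JU) JV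

end Prod

section Subspaces

variable {X : Type*} [AddCommGroup X] [Module ℝ X]

/-- A subspace `Γ` of a GC vector space `(X, J)` is generalized isotropic if
`J(Γ ⊕ 0) ⊆ Γ ⊕ Ann(Γ)`. -/
def GenIsotropic (J : (X × Module.Dual ℝ X) →ₗ[ℝ] (X × Module.Dual ℝ X))
    (Γ : Submodule ℝ X) : Prop :=
  ∀ x ∈ Γ, J (x, 0) ∈ Γ.prod Γ.dualAnnihilator

/-- A subspace `Γ` of a GC vector space `(X, J)` is generalized coisotropic if
`J(0 ⊕ Ann(Γ)) ⊆ Γ ⊕ Ann(Γ)`. -/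
def GenCoisotropic (J : (X × Module.Dual ℝ X) →ₗ[ℝ] (X × Module.Dual ℝ X))
    (Γ : Submodule ℝ X) : Prop :=
  ∀ f ∈ Γ.dualAnnihilator, J (0, f) ∈ Γ.prod Γ.dualAnnihilator

/-- A subspace `Γ` of a GC vector space `(X, J)` is generalized Lagrangian if
`Γ ⊕ Ann(Γ)` is stable under `J`. -/
def GenLagrangian (J : (X × Module.Dual ℝ X) →ₗ[ℝ] (X × Module.Dual ℝ X))
    (Γ : Submodule ℝ X) : Prop :=
  ∀ p ∈ Γ.prod Γ.dualAnnihilator, J p ∈ Γ.prod Γ.dualAnnihilator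

end Subspaces

/-- The GCS induced on a split subspace `W` (with splitting `V = W ⊕ N`):
`ψ ∘ (𝓙|_{W ⊕ Ann(N)}) ∘ ψ⁻¹`, where `ψ(w,f) = (w, f|_W)`. -/
noncomputable def inducedSplitJ
    {V : Type*} [AddCommGroup V] [Module ℝ V]
    (J : (V × Module.Dual ℝ V) →ₗ[ℝ] (V × Module.Dual ℝ V))
    (W N : Submodule ℝ V) (hWN : IsCompl W N) :
    (↥W × Module.Dual ℝ ↥W) →ₗ[ℝ] (↥W × Module.Dual ℝ ↥W) :=
  (LinearMap.prodMap (W.linearProjOfIsCompl N hWN) (W.subtype.dualMap)) ∘ₗ J ∘ₗ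
    (LinearMap.prodMap W.subtype ((W.linearProjOfIsCompl N hWN).dualMap))

theorem split_subspace_satisfies_graph_condition
    (V : Type*) [AddCommGroup V] [Module ℝ V] [FiniteDimensional ℝ V]
    (J : (V × Module.Dual ℝ V) →ₗ[ℝ] (V × Module.Dual ℝ V)) (hJ : IsGCS V J)
    (W N : Submodule ℝ V) (hWN : IsCompl W N)
    (hstable : ∀ p ∈ W.prod N.dualAnnihilator, J p ∈ W.prod N.dualAnnihilator) :
    GenIsotropic (twistedProd ↥W V (inducedSplitJ J W N hWN) J)
      (LinearMap.graph W.subtype) := by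
  intro x hx
  rw [LinearMap.mem_graph_iff] at hx
  obtain ⟨a, b⟩ := x
  dsimp only at hx
  subst hx
  have hmem : ((W.subtype a : V), (0 : Module.Dual ℝ V)) ∈ W.prod N.dualAnnihilator := by
    simp [Submodule.mem_prod]
  have hJa := hstable _ hmem
  rw [Submodule.mem_prod] at hJa
  obtain ⟨hc, hf⟩ := hJa
  rw [Submodule.mem_prod]
  simp only [twistedProd, directSum, prodPack, gcTwist, ofBlocks, blk1, blk2, blk3, blk4,
    inducedSplitJ, LinearMap.coe_comp, Function.comp_apply, LinearEquiv.coe_coe,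
    LinearEquiv.trans_apply, LinearEquiv.prodCongr_apply, LinearEquiv.refl_apply,
    LinearEquiv.prodProdProdComm_apply, LinearMap.prodMap_apply, LinearMap.prod_apply,
    LinearMap.add_apply, LinearMap.fst_apply, LinearMap.snd_apply, LinearMap.neg_apply,
    LinearMap.inl_apply, LinearMap.inr_apply, Function.prod, LinearMap.map_zero,
    LinearEquiv.trans_symm, LinearEquiv.symm_symm, map_zero, Prod.fst_zero, Prod.snd_zero,
    LinearEquiv.prodProdProdComm_symm, LinearEquiv.prodCongr_symm, LinearEquiv.refl_symm,
    Prod.mk_eq_zero]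
  refine ⟨?_, ?_⟩
  · rw [LinearMap.mem_graph_iff]
    show (J (W.subtype a, 0)).1 = W.subtype _
    rw [add_zero]
    exact (congrArg Subtype.val (Submodule.linearProjOfIsCompl_apply_left hWN
      ⟨(J (W.subtype a, 0)).1, hc⟩)).symm
  · rw [Submodule.mem_dualAnnihilator]
    rintro ⟨u, v⟩ huv
    rw [LinearMap.mem_graph_iff] at huv
    dsimp only at huv
    subst huv
    simp [Module.dualProdDualEquivDual, LinearMap.dualMap_apply]
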